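/- Let a, b : Fin n → ℝ be strictly positive tuples (n ≥ 1). Then the quotient p ↦ (∑ k, (a k)^p)^(1/p) / (∑ k, (b k)^p)^(1/p) tends to (∏ k, (a k)/(b k))^(1/n) as p → 0 (over nonzero p). -/

import Mathlib

open Filter Real Finset

theorem stmt_14 (n : ℕ) (hn : 1 ≤ n) (a b : Fin n → ℝ)
    (ha : ∀ k, 0 < a k) (hb : ∀ k, 0 < b k) :
    Filter.Tendsto
      (fun p : ℝ => (∑ k, (a k) ^ p) ^ (1 / p) / (∑ k, (b k) ^ p) ^ (1 / p))
      (nhdsWithin 0 {0}ᶜ)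
      (nhds ((∏ k, a k / b k) ^ ((1 : ℝ) / n))) := by
  have hne : Nonempty (Fin n) := ⟨⟨0, hn⟩⟩
  have hsum : ∀ (c : Fin n → ℝ), (∀ k, 0 < c k) → ∀ p : ℝ, 0 < ∑ k, c k ^ p := by
    intro c hc p
    exact Finset.sum_pos (fun k _ => Real.rpow_pos_of_pos (hc k) p) Finset.univ_nonempty
  have hderiv : ∀ (c : Fin n → ℝ), (∀ k, 0 < c k) →
      HasDerivAt (fun p : ℝ => Real.log (∑ k, c k ^ p))
        ((∑ k, Real.log (c k)) / n) 0 := by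
    intro c hc
    have h1 : HasDerivAt (fun p : ℝ => ∑ k, c k ^ p)
        (∑ k : Fin n, c k ^ (0:ℝ) * Real.log (c k)) 0 := by
      apply HasDerivAt.fun_sum
      intro k _
      exact (hasStrictDerivAt_const_rpow (hc k) 0).hasDerivAt
    have h2 := h1.log (ne_of_gt (hsum c hc 0))
    convert h2 using 1
    simp only [Real.rpow_zero, one_mul]
    rw [Finset.sum_const, Finset.card_univ, Fintype.card_fin]
    simp
  have hta := (hasDerivAt_iff_tendsto_slope.mp (hderiv a ha))
  have htb := (hasDerivAt_iff_tendsto_slope.mp (hderiv b hb))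
  have ht := hta.sub htb
  have hexp := (Real.continuous_exp.continuousAt (x := (∑ k, Real.log (a k)) / n - (∑ k, Real.log (b k)) / n)).tendsto.comp ht
  have key : ∀ p : ℝ,
      Real.exp (slope (fun p : ℝ => Real.log (∑ k, a k ^ p)) 0 p
        - slope (fun p : ℝ => Real.log (∑ k, b k ^ p)) 0 p)
      = (∑ k, (a k) ^ p) ^ (1 / p) / (∑ k, (b k) ^ p) ^ (1 / p) := by
    intro p
    rw [slope_def_field, slope_def_field]
    rw [Real.rpow_def_of_pos (hsum a ha p), Real.rpow_def_of_pos (hsum b hb p),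
      ← Real.exp_sub]
    congr 1
    field_simp
    simp only [Real.rpow_zero]
    ring
  have hval : Real.exp ((∑ k, Real.log (a k)) / n - (∑ k, Real.log (b k)) / n)
      = (∏ k, a k / b k) ^ ((1 : ℝ) / n) := by
    have hprod : 0 < ∏ k, a k / b k :=
      Finset.prod_pos (fun k _ => div_pos (ha k) (hb k))
    rw [Real.rpow_def_of_pos hprod]
    congr 1
    rw [Real.log_prod (fun k _ => ne_of_gt (div_pos (ha k) (hb k)))]
    have : ∀ k : Fin n, Real.log (a k / b k) = Real.log (a k) - Real.log (b k) :=
      fun k => Real.log_div (ne_of_gt (ha k)) (ne_of_gt (hb k))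
    simp only [this, Finset.sum_sub_distrib]
    field_simp
  rw [← hval]
  exact hexp.congr (fun p => key p)
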